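/- Let m ≥ 2 be an integer. For all real x and t, the series G(x,t|m) = ∑_{n=0}^∞ (t^n/n!) J_{mn}(2x) converges absolutely and G(x,t|m) = {}_H C_0^{(m)}(x², (-x)^m t), i.e. ∑_{n=0}^∞ (t^n/n!) J_{mn}(2x) = ∑_{k=0}^∞ [(-1)^k/(k!)²] H_k^{(m)}(x², (-x)^m t). -/

import Mathlib

/-- The Bessel function of the first kind of integer order `μ`:
`J_μ(x) = ∑_k (-1)^k (x/2)^(2k+μ) / (k! (k+μ)!)`. -/
noncomputable def besselJNat (μ : ℕ) (x : ℝ) : ℝ :=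
  ∑' k : ℕ, (-1) ^ k * (x / 2) ^ (2 * k + μ) /
    ((k.factorial : ℝ) * ((k + μ).factorial : ℝ))

/-- The higher-order Hermite (Gould–Hopper) polynomials (real arguments):
`H_n^(m)(u,v) = n! ∑_{k=0}^{⌊n/m⌋} u^(n-mk) v^k / ((n-mk)! k!)`. -/
noncomputable def gouldHopper (m n : ℕ) (u v : ℝ) : ℝ :=
  (n.factorial : ℝ) * ∑ k ∈ Finset.range (n / m + 1),
    u ^ (n - m * k) * v ^ k / (((n - m * k).factorial : ℝ) * (k.factorial : ℝ))

/-- The double-series term `F (n,k) = t^n/n! · (-1)^k x^(2k+mn)/(k!(k+mn)!)`. -/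
noncomputable def Faux (m : ℕ) (x t : ℝ) (p : ℕ × ℕ) : ℝ :=
  t ^ p.1 / (p.1.factorial : ℝ) *
    ((-1) ^ p.2 * x ^ (2 * p.2 + m * p.1) /
      ((p.2.factorial : ℝ) * ((p.2 + m * p.1).factorial : ℝ)))

lemma Faux_abs_le (m : ℕ) (x t : ℝ) (p : ℕ × ℕ) :
    |Faux m x t p| ≤ (|t| * |x| ^ m) ^ p.1 / (p.1.factorial : ℝ) *
      ((x ^ 2) ^ p.2 / (p.2.factorial : ℝ)) := by
  obtain ⟨n, k⟩ := p
  have h1 : (0:ℝ) < (n.factorial : ℝ) := by exact_mod_cast n.factorial_pos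
  have h2 : (0:ℝ) < (k.factorial : ℝ) := by exact_mod_cast k.factorial_pos
  have h3 : (0:ℝ) < ((k + m * n).factorial : ℝ) := by exact_mod_cast (k + m * n).factorial_pos
  have habs : |Faux m x t (n, k)| =
      |t| ^ n / (n.factorial : ℝ) *
        (|x| ^ (2 * k + m * n) / ((k.factorial : ℝ) * ((k + m * n).factorial : ℝ))) := by
    simp [Faux, abs_mul, abs_div, abs_pow, abs_of_pos h1, abs_of_pos h2, abs_of_pos h3,
      mul_pos h2 h3, abs_of_pos (mul_pos h2 h3)]
  rw [habs]
  have hxpow : |x| ^ (2 * k + m * n) = (x ^ 2) ^ k * (|x| ^ m) ^ n := by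
    rw [pow_add, pow_mul, sq_abs, pow_mul]
  rw [hxpow]
  have hk : (k.factorial : ℝ) ≤ (k.factorial : ℝ) * ((k + m * n).factorial : ℝ) := by
    nlinarith [h3, h2, (by exact_mod_cast Nat.one_le_iff_ne_zero.mpr (k + m*n).factorial_ne_zero : (1:ℝ) ≤ ((k + m * n).factorial : ℝ))]
  have hx2 : (0:ℝ) ≤ (x ^ 2) ^ k := by positivity
  have hxm : (0:ℝ) ≤ (|x| ^ m) ^ n := by positivity
  have ht : (0:ℝ) ≤ |t| ^ n := by positivity
  calc |t| ^ n / (n.factorial : ℝ) *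
        ((x ^ 2) ^ k * (|x| ^ m) ^ n / ((k.factorial : ℝ) * ((k + m * n).factorial : ℝ)))
      ≤ |t| ^ n / (n.factorial : ℝ) * ((x ^ 2) ^ k * (|x| ^ m) ^ n / (k.factorial : ℝ)) := by
        gcongr
      _ = (|t| * |x| ^ m) ^ n / (n.factorial : ℝ) * ((x ^ 2) ^ k / (k.factorial : ℝ)) := by
        rw [mul_pow]; ring

lemma Faux_abs_summable (m : ℕ) (x t : ℝ) :
    Summable fun p : ℕ × ℕ => |Faux m x t p| := by
  have ha : Summable fun n : ℕ => (|t| * |x| ^ m) ^ n / (n.factorial : ℝ) :=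
    Real.summable_pow_div_factorial _
  have hb : Summable fun k : ℕ => (x ^ 2) ^ k / (k.factorial : ℝ) :=
    Real.summable_pow_div_factorial _
  have hab := ha.mul_of_nonneg hb (fun n => by positivity) (fun k => by positivity)
  exact hab.of_nonneg_of_le (fun p => abs_nonneg _) (Faux_abs_le m x t)

lemma Faux_key (m : ℕ) (x t : ℝ) (n : ℕ) :
    t ^ n / (n.factorial : ℝ) * besselJNat (m * n) (2 * x) = ∑' k, Faux m x t (n, k) := by
  rw [besselJNat, ← tsum_mul_left]
  apply tsum_congr
  intro k
  have h2x : (2 * x) / 2 = x := by ring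
  simp only [Faux, h2x]

/-- termwise identity matching `F (j, k - m j)` with the Gould–Hopper term. -/
lemma Faux_term_eq (m j k : ℕ) (x t : ℝ) (h : m * j ≤ k) :
    Faux m x t (j, k - m * j)
      = (-1) ^ k / ((k.factorial : ℝ)) ^ 2 *
          ((k.factorial : ℝ) * ((x ^ 2) ^ (k - m * j) * ((-x) ^ m * t) ^ j /
            (((k - m * j).factorial : ℝ) * (j.factorial : ℝ)))) := by
  obtain ⟨i, rfl⟩ := Nat.exists_eq_add_of_le h
  simp only [Faux, Nat.add_sub_cancel_left]
  have hfac : (i + m * j).factorial = (m * j + i).factorial := by rw [Nat.add_comm]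
  have h1 : (0:ℝ) < (j.factorial : ℝ) := by exact_mod_cast j.factorial_pos
  have h2 : (0:ℝ) < (i.factorial : ℝ) := by exact_mod_cast i.factorial_pos
  have h3 : (0:ℝ) < ((m * j + i).factorial : ℝ) := by exact_mod_cast (m * j + i).factorial_pos
  have hneg : ((-x) ^ m * t) ^ j = (-1) ^ (m * j) * (x ^ (m * j) * t ^ j) := by
    rw [mul_pow, neg_pow, mul_pow, ← pow_mul, ← pow_mul]; ring
  have hx2 : (x ^ 2) ^ i = x ^ (2 * i) := by rw [← pow_mul]
  have hxp : x ^ (2 * i + m * j) = x ^ (2 * i) * x ^ (m * j) := pow_add x _ _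
  have hsgn : ((-1 : ℝ)) ^ (m * j + i) = (-1) ^ (m * j) * (-1) ^ i := pow_add (-1) _ _
  rw [hfac, hneg, hx2, hxp, hsgn]
  rcases Nat.even_or_odd (m * j) with he' | ho
  · rw [he'.neg_one_pow]; field_simp
  · rw [ho.neg_one_pow]; field_simp

/-- For `m ≥ 2` and all real `x, t`, the series `G(x,t|m) = ∑_n (t^n/n!) J_{mn}(2x)`
converges absolutely and equals the Hermite-based Tricomi function
`_H C_0^(m)(x², (-x)^m t) = ∑_k [(-1)^k/(k!)²] H_k^(m)(x², (-x)^m t)`. -/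
theorem generating_function_eq_hermiteTricomi (m : ℕ) (hm : 2 ≤ m) (x t : ℝ) :
    Summable (fun n : ℕ => |t ^ n / (n.factorial : ℝ) * besselJNat (m * n) (2 * x)|) ∧
      ∑' n : ℕ, t ^ n / (n.factorial : ℝ) * besselJNat (m * n) (2 * x)
        = ∑' k : ℕ, (-1) ^ k / ((k.factorial : ℝ) ^ 2) *
            gouldHopper m k (x ^ 2) ((-x) ^ m * t) := by
  have hm0 : 0 < m := by omega
  set F := Faux m x t with hF
  have hFabs : Summable fun p : ℕ × ℕ => |F p| := Faux_abs_summable m x t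
  have hFs : Summable F := hFabs.of_abs
  have hmarg := (summable_prod_of_nonneg (f := fun p : ℕ × ℕ => |F p|)
    (fun p => abs_nonneg _)).mp hFabs
  -- Part 1 : summability
  have hsum1 : Summable (fun n : ℕ => |t ^ n / (n.factorial : ℝ) * besselJNat (m * n) (2 * x)|) := by
    apply hmarg.2.of_nonneg_of_le (fun n => abs_nonneg _)
    intro n
    rw [Faux_key m x t n]
    have := norm_tsum_le_tsum_norm (f := fun k => F (n, k)) (by simpa using hmarg.1 n)
    simpa [Real.norm_eq_abs] using this
  refine ⟨hsum1, ?_⟩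
  -- LHS = sum over pairs
  have hL : ∑' n : ℕ, t ^ n / (n.factorial : ℝ) * besselJNat (m * n) (2 * x)
      = ∑' p : ℕ × ℕ, F p := by
    rw [hFs.tsum_prod]
    exact tsum_congr fun n => Faux_key m x t n
  -- the reindexing map
  set e : ℕ × ℕ → ℕ × ℕ := fun p => (p.2 + m * p.1, p.1) with he
  have he_inj : Function.Injective e := by
    intro p q hpq
    simp only [he, Prod.mk.injEq] at hpq
    obtain ⟨h1, h2⟩ := hpq
    have : p.2 = q.2 := by rw [h2] at h1; omega
    exact Prod.ext h2 this
  set G : ℕ × ℕ → ℝ := fun q => if m * q.2 ≤ q.1 then F (q.2, q.1 - m * q.2) else 0 with hG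
  have hGe : ∀ p : ℕ × ℕ, G (e p) = F p := by
    rintro ⟨n, k⟩
    simp only [hG, he]
    rw [if_pos (Nat.le_add_left _ _)]
    simp
  have hGsupp : ∀ q ∉ Set.range e, G q = 0 := by
    intro q hq
    by_contra hne
    have hle : m * q.2 ≤ q.1 := by
      by_contra h; exact hne (by simp [hG, h])
    refine hq ⟨(q.2, q.1 - m * q.2), ?_⟩
    have h' : q.1 - m * q.2 + m * q.2 = q.1 := by omega
    simp [he, h']
  have hGsum : Summable G := by
    rw [← he_inj.summable_iff hGsupp]
    exact hFs.congr fun p => (hGe p).symm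
  have hGF : ∑' q : ℕ × ℕ, G q = ∑' p : ℕ × ℕ, F p := by
    rw [← he_inj.tsum_eq (Function.support_subset_iff'.mpr hGsupp)]
    exact tsum_congr hGe
  rw [hL, ← hGF, hGsum.tsum_prod]
  apply tsum_congr
  intro k
  have hfin : ∀ j ∉ Finset.range (k / m + 1), G (k, j) = 0 := by
    intro j hj
    simp only [Finset.mem_range] at hj
    have : k / m < j := by omega
    have : k < m * j := by
      rw [Nat.mul_comm]
      exact (Nat.div_lt_iff_lt_mul hm0).mp this
    simp [hG, Nat.not_le.mpr this]
  rw [tsum_eq_sum hfin, gouldHopper, Finset.mul_sum, Finset.mul_sum]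
  apply Finset.sum_congr rfl
  intro j hj
  simp only [Finset.mem_range] at hj
  have hjk : m * j ≤ k := by
    have : j ≤ k / m := by omega
    calc m * j = j * m := Nat.mul_comm m j
      _ ≤ k := (Nat.le_div_iff_mul_le hm0).mp this
  have := Faux_term_eq m j k x t hjk
  simp only [hG, if_pos hjk]
  rw [hF]
  exact this
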